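/- Let F ⊆ A be a field extension with A algebraically closed, and let f1,...,fm ∈ F[x1,...,xn]. There exists an annihilator of (f1,...,fm) over A with nonzero constant term if and only if there exists an annihilator over F with nonzero constant term. -/

import Mathlib

open MvPolynomial

private lemma map_aeval_comm {F A : Type*} [Field F] [Field A] [Algebra F A] {n m : ℕ}
    (f : Fin m → MvPolynomial (Fin n) F) (p : MvPolynomial (Fin m) F) :
    aeval (fun i => (f i).map (algebraMap F A)) (p.map (algebraMap F A)) =
      (aeval f p).map (algebraMap F A) := by
  induction p using MvPolynomial.induction_on with
  | C a => simp [aeval_C, algebraMap_eq]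
  | add p q hp hq => simp only [map_add, hp, hq]
  | mul_X p i hp => simp only [map_mul, map_X, aeval_X, hp]

/-- For `f 1, ..., f m` with coefficients in `F ⊆ A` (`A` algebraically closed), there is an
annihilator over `A` with nonzero constant term iff there is one over `F`. -/
theorem annihilator_nonzero_constant_descends {F A : Type*} [Field F] [Field A]
    [Algebra F A] [IsAlgClosed A] {n m : ℕ} (f : Fin m → MvPolynomial (Fin n) F) :
    (∃ Q : MvPolynomial (Fin m) A, Q ≠ 0 ∧
        aeval (fun i => (f i).map (algebraMap F A)) Q = 0 ∧ constantCoeff Q ≠ 0) ↔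
    (∃ Q : MvPolynomial (Fin m) F, Q ≠ 0 ∧ aeval f Q = 0 ∧ constantCoeff Q ≠ 0) := by
  constructor
  · rintro ⟨Q, -, hQann, hQc⟩
    classical
    set b := Module.Basis.ofVectorSpace F A with hb
    set K : Finset (Module.Basis.ofVectorSpaceIndex F A) :=
      Q.support.biUnion (fun s => (b.repr (Q.coeff s)).support) with hK
    -- the "coordinate" polynomials over F
    set P : Module.Basis.ofVectorSpaceIndex F A → MvPolynomial (Fin m) F :=
      fun k => ∑ s ∈ Q.support, monomial s (b.repr (Q.coeff s) k) with hP
    have hPcoeff : ∀ k t, coeff t (P k) = b.repr (Q.coeff t) k := by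
      intro k t
      rw [hP]
      simp only [coeff_sum, coeff_monomial]
      by_cases ht : t ∈ Q.support
      · rw [Finset.sum_eq_single t (fun s _ hs => if_neg hs) (fun h => absurd ht h)]
        simp
      · rw [Finset.sum_eq_zero (fun s hs => by
          rcases eq_or_ne s t with rfl | hne
          · exact absurd hs ht
          · exact if_neg hne)]
        rw [notMem_support_iff.mp ht]
        simp
    -- reconstructing a coefficient of Q from the coordinates
    have hrec : ∀ t, Q.coeff t = ∑ k ∈ K, b.repr (Q.coeff t) k • b k := by
      intro t
      by_cases ht : t ∈ Q.support
      · have hsub : (b.repr (Q.coeff t)).support ⊆ K :=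
          Finset.subset_biUnion_of_mem (fun s => (b.repr (Q.coeff s)).support) ht
        rw [← Finset.sum_subset hsub (fun k _ hk => by
          rw [Finsupp.notMem_support_iff.mp hk, zero_smul])]
        conv_lhs => rw [← b.linearCombination_repr (Q.coeff t)]
        simp [Finsupp.linearCombination_apply, Finsupp.sum]
      · rw [notMem_support_iff.mp ht]
        simp
    -- decomposition of Q
    have hdec : Q = ∑ k ∈ K, b k • (P k).map (algebraMap F A) := by
      apply MvPolynomial.ext
      intro t
      rw [coeff_sum]
      simp only [coeff_smul, coeff_map, hPcoeff, smul_eq_mul]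
      conv_lhs => rw [hrec t]
      exact Finset.sum_congr rfl fun k _ => by rw [Algebra.smul_def, mul_comm]
    -- the coordinate polynomials are annihilators
    have hann : ∀ k ∈ K, aeval f (P k) = 0 := by
      have h0 : ∑ k ∈ K, b k • ((aeval f (P k)).map (algebraMap F A)) = 0 := by
        rw [← hQann]
        conv_rhs => rw [hdec]
        rw [map_sum]
        exact Finset.sum_congr rfl fun k _ => by
          rw [map_smul, map_aeval_comm]
      intro k hk
      apply MvPolynomial.ext
      intro t
      have ht : ∑ j ∈ K, (coeff t (aeval f (P j))) • b j = 0 := by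
        have h1 := congrArg (coeff t) h0
        rw [coeff_sum] at h1
        simp only [coeff_smul, coeff_map, smul_eq_mul, coeff_zero] at h1
        rw [← h1]
        exact Finset.sum_congr rfl fun j _ => by rw [Algebra.smul_def, mul_comm]
      have h2 := linearIndependent_iff'.mp b.linearIndependent K
        (fun j => coeff t (aeval f (P j))) ht k hk
      simpa using h2
    -- find a coordinate with nonzero constant term
    have : ∃ k ∈ K, b.repr (Q.coeff 0) k ≠ 0 := by
      by_contra h
      push_neg at h
      apply hQc
      rw [constantCoeff_eq]
      show coeff 0 Q = 0
      rw [hrec 0]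
      exact Finset.sum_eq_zero (fun k hk => by rw [h k hk, zero_smul])
    obtain ⟨k, hkK, hk0⟩ := this
    refine ⟨P k, ?_, hann k hkK, ?_⟩
    · intro h
      apply hk0
      have h3 := hPcoeff k 0
      rw [h] at h3
      simpa using h3.symm
    · rw [constantCoeff_eq]
      show coeff 0 (P k) ≠ 0
      rw [hPcoeff k 0]
      exact hk0
  · rintro ⟨Q, hQ0, hQann, hQc⟩
    refine ⟨Q.map (algebraMap F A), ?_, ?_, ?_⟩
    · simpa using (map_injective _ (algebraMap F A).injective).ne_iff.mpr hQ0
    · rw [map_aeval_comm, hQann, map_zero]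
    · rw [constantCoeff_map]
      simpa using hQc
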